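/- Let Ω ⊆ ℝ³ be an open set (possibly unbounded) and let a₁, a₂, a₃ : Ω → ℝ be continuously differentiable with M := Σ_{i,ℓ=1}³ ‖a_i ∂_i a_ℓ‖_{L³(Ω)} < ∞. Then for every continuously differentiable u : Ω → ℍ with compact support contained in Ω, | (1/2) Σ_{ℓ=1}³ ∫_Ω star(∂ₗu(x)) ∂ₗ(aₗ²)(x) u(x) dx + ∫_Ω star((Vu)(x)) u(x) dx | ≤ 4M · D₁(u)². -/

import Mathlib

open MeasureTheory

noncomputable section

/-- `ℝ³`, modelled as `Fin 3 → ℝ`. -/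
abbrev R3 := Fin 3 → ℝ

/-- Partial derivative in the `ℓ`-th coordinate direction of a quaternion-valued function. -/
def pdQ (ℓ : Fin 3) (u : R3 → Quaternion ℝ) (x : R3) : Quaternion ℝ :=
  fderiv ℝ u x (Pi.single ℓ 1)

/-- Partial derivative in the `ℓ`-th coordinate direction of a real-valued function. -/
def pdR (ℓ : Fin 3) (f : R3 → ℝ) (x : R3) : ℝ :=
  fderiv ℝ f x (Pi.single ℓ 1)

/-- The imaginary units `e₁, e₂, e₃` of the quaternions. -/
def eQ : Fin 3 → Quaternion ℝ
  | 0 => ⟨0, 1, 0, 0⟩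
  | 1 => ⟨0, 0, 1, 0⟩
  | 2 => ⟨0, 0, 0, 1⟩

/-- The vector operator `T u = Σₗ eₗ (aₗ ∂ₗ u)`. -/
def Tvec (a : Fin 3 → R3 → ℝ) (u : R3 → Quaternion ℝ) (x : R3) : Quaternion ℝ :=
  ∑ ℓ : Fin 3, eQ ℓ * (a ℓ x • pdQ ℓ u x)

/-- The first-order vector operator
`V u = e₁(a₃(∂₃a₂)∂₂u − a₂(∂₂a₃)∂₃u) + e₂(a₃(∂₃a₁)∂₁u − a₁(∂₁a₃)∂₃u)
      + e₃(a₁(∂₁a₂)∂₂u − a₂(∂₂a₁)∂₁u)`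
(indices shifted by one: `aᵢ = a (i-1)`, `eᵢ = eQ (i-1)`). -/
def Vop (a : Fin 3 → R3 → ℝ) (u : R3 → Quaternion ℝ) (x : R3) : Quaternion ℝ :=
  eQ 0 * ((a 2 x * pdR 2 (a 1) x) • pdQ 1 u x - (a 1 x * pdR 1 (a 2) x) • pdQ 2 u x)
  + eQ 1 * ((a 2 x * pdR 2 (a 0) x) • pdQ 0 u x - (a 0 x * pdR 0 (a 2) x) • pdQ 2 u x)
  + eQ 2 * ((a 0 x * pdR 0 (a 1) x) • pdQ 1 u x - (a 1 x * pdR 1 (a 0) x) • pdQ 0 u x)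

/-- The `L²(Ω)` norm `(∫_Ω |g|²)^{1/2}` of a quaternion-valued function. -/
def nL2 (Ω : Set R3) (g : R3 → Quaternion ℝ) : ℝ :=
  (∫ x in Ω, ‖g x‖ ^ 2) ^ ((1 : ℝ) / 2)

/-- `D₁(u) = Σₗ ‖∂ₗu‖_{L²(Ω)}`. -/
def D1 (Ω : Set R3) (u : R3 → Quaternion ℝ) : ℝ :=
  ∑ ℓ : Fin 3, nL2 Ω (pdQ ℓ u)

/-- The squared Dirichlet seminorm `‖u‖²_D = Σₗ ‖∂ₗu‖²_{L²(Ω)}`. -/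
def nD2 (Ω : Set R3) (u : R3 → Quaternion ℝ) : ℝ :=
  ∑ ℓ : Fin 3, ∫ x in Ω, ‖pdQ ℓ u x‖ ^ 2

/-- `M = Σ_{i,ℓ} ‖aᵢ ∂ᵢ aₗ‖_{L³(Ω)}`. -/
def Msum (Ω : Set R3) (a : Fin 3 → R3 → ℝ) : ℝ :=
  ∑ i : Fin 3, ∑ ℓ : Fin 3, (∫ x in Ω, |a i x * pdR i (a ℓ) x| ^ 3) ^ ((1 : ℝ) / 3)

/-- The real part `Re b_{js₁}(u,u)` of the quadratic form of Definition 3.2 of the paper,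
for a purely imaginary spectral parameter `s = j s₁`:
`ReB(u) = s₁²‖u‖²_{L²} + Σₗ‖aₗ∂ₗu‖²_{L²}
  + Re((1/2) Σₗ ∫_Ω star(∂ₗu) ∂ₗ(aₗ²) u + ∫_Ω star(Vu) u)`. -/
def ReB (Ω : Set R3) (a : Fin 3 → R3 → ℝ) (s₁ : ℝ) (u : R3 → Quaternion ℝ) : ℝ :=
  s₁ ^ 2 * (∫ x in Ω, ‖u x‖ ^ 2)
  + (∑ ℓ : Fin 3, ∫ x in Ω, ‖a ℓ x • pdQ ℓ u x‖ ^ 2)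
  + ((1 / 2 : ℝ) • (∑ ℓ : Fin 3,
        ∫ x in Ω, star (pdQ ℓ u x) * (pdR ℓ (fun y => a ℓ y ^ 2) x • u x))
      + ∫ x in Ω, star (Vop a u x) * u x).re

lemma clm_norm_le_sum {F : Type*} [NormedAddCommGroup F] [NormedSpace ℝ F]
    (L : R3 →L[ℝ] F) : ‖L‖ ≤ ∑ m : Fin 3, ‖L (Pi.single m 1)‖ := by
  refine ContinuousLinearMap.opNorm_le_bound _ (by positivity) fun y => ?_
  have hy : y = ∑ m : Fin 3, y m • (Pi.single m 1 : R3) := by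
    funext j
    simp [Finset.sum_apply, Pi.single_apply]
  calc ‖L y‖ = ‖∑ m : Fin 3, y m • L (Pi.single m 1)‖ := by
        conv_lhs => rw [hy]
        rw [map_sum]
        simp
    _ ≤ ∑ m : Fin 3, ‖y m • L (Pi.single m 1)‖ := norm_sum_le _ _
    _ ≤ ∑ m : Fin 3, ‖L (Pi.single m 1)‖ * ‖y‖ := by
        refine Finset.sum_le_sum fun m _ => ?_
        rw [norm_smul, mul_comm]
        have := norm_le_pi_norm y m
        have h2 : ‖y m‖ ≤ ‖y‖ := by simpa using this
        gcongr
    _ = (∑ m : Fin 3, ‖L (Pi.single m 1)‖) * ‖y‖ := by rw [Finset.sum_mul]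

open scoped ENNReal NNReal

lemma ofReal_norm_eq_coe_nnnorm {E : Type*} [SeminormedAddGroup E] (a : E) :
    ENNReal.ofReal ‖a‖ = (‖a‖₊ : ℝ≥0∞) := by
  rw [ofReal_norm, enorm_eq_nnnorm]
set_option maxHeartbeats 1000000
set_option synthInstance.maxHeartbeats 400000

lemma conj32 : Real.HolderConjugate (Fintype.card (Fin 3)) (3/2 : ℝ) := by
  rw [show ((Fintype.card (Fin 3) : ℝ)) = 3 by simp]
  constructor <;> norm_num

-- pointwise derivative bound for v = ‖u‖⁴
lemma fderiv_pow4_bound (u : R3 → Quaternion ℝ) (hu : ContDiff ℝ 1 u) (x : R3) :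
    ‖fderiv ℝ (fun y => ‖u y‖^2 * ‖u y‖^2) x‖ ≤ 4 * ‖u x‖^3 * ‖fderiv ℝ u x‖ := by
  have hux : HasFDerivAt u (fderiv ℝ u x) x :=
    (hu.differentiable one_ne_zero x).hasFDerivAt
  have hn : HasFDerivAt (fun y => ‖u y‖^2)
      (2 • (innerSL ℝ (u x)).comp (fderiv ℝ u x)) x := hux.norm_sq
  have hv : HasFDerivAt (fun y => ‖u y‖^2 * ‖u y‖^2)
      (‖u x‖^2 • (2 • (innerSL ℝ (u x)).comp (fderiv ℝ u x))
        + ‖u x‖^2 • (2 • (innerSL ℝ (u x)).comp (fderiv ℝ u x))) x := hn.mul hn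
  rw [hv.fderiv]
  have hni : ‖(innerSL ℝ (u x)).comp (fderiv ℝ u x)‖ ≤ ‖u x‖ * ‖fderiv ℝ u x‖ := by
    refine le_trans (ContinuousLinearMap.opNorm_comp_le _ _) ?_
    gcongr
    exact (innerSL_apply_norm (𝕜 := ℝ) (x := u x)).le
  have h2 : ‖(2 : ℕ) • (innerSL ℝ (u x)).comp (fderiv ℝ u x)‖
      ≤ 2 * (‖u x‖ * ‖fderiv ℝ u x‖) := by
    rw [two_smul]
    calc ‖_ + _‖ ≤ ‖_‖ + ‖_‖ := norm_add_le _ _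
      _ ≤ _ := by rw [two_mul]; exact add_le_add hni hni
  calc ‖_ + _‖ ≤ ‖(‖u x‖^2 • (2 • (innerSL ℝ (u x)).comp (fderiv ℝ u x)))‖
        + ‖(‖u x‖^2 • (2 • (innerSL ℝ (u x)).comp (fderiv ℝ u x)))‖ := norm_add_le _ _
    _ ≤ ‖u x‖^2 * (2 * (‖u x‖ * ‖fderiv ℝ u x‖))
        + ‖u x‖^2 * (2 * (‖u x‖ * ‖fderiv ℝ u x‖)) := by
        have : ‖(‖u x‖^2 • (2 • (innerSL ℝ (u x)).comp (fderiv ℝ u x)))‖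
            = ‖u x‖^2 * ‖(2 : ℕ) • (innerSL ℝ (u x)).comp (fderiv ℝ u x)‖ := by
          rw [norm_smul (‖u x‖^2) ((2:ℕ) • (innerSL ℝ (u x)).comp (fderiv ℝ u x))]
          simp [abs_of_nonneg (sq_nonneg ‖u x‖)]
        rw [this]
        exact add_le_add (mul_le_mul_of_nonneg_left h2 (sq_nonneg _))
          (mul_le_mul_of_nonneg_left h2 (sq_nonneg _))
    _ = 4 * ‖u x‖^3 * ‖fderiv ℝ u x‖ := by ring

lemma ennnorm_pdQ_cont (u : R3 → Quaternion ℝ) (hu : ContDiff ℝ 1 u) (m : Fin 3) :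
    Continuous (pdQ m u) := by
  have hDu : Continuous (fderiv ℝ u) := hu.continuous_fderiv one_ne_zero
  exact ((ContinuousLinearMap.apply ℝ (Quaternion ℝ) ((Pi.single m 1 : R3))).continuous).comp hDu

lemma sobolev4 (u : R3 → Quaternion ℝ) (hu : ContDiff ℝ 1 u) (h2u : HasCompactSupport u) :
    (∫⁻ x, (‖u x‖₊ : ℝ≥0∞) ^ (6:ℝ)) ^ (1/6 : ℝ)
      ≤ 4 * ∑ m : Fin 3, (∫⁻ x, (‖pdQ m u x‖₊ : ℝ≥0∞) ^ (2:ℝ)) ^ (1/2:ℝ) := by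
  have hDu : Continuous (fderiv ℝ u) := hu.continuous_fderiv one_ne_zero
  set X := ∫⁻ x, (‖u x‖₊ : ℝ≥0∞) ^ (6:ℝ) with hXdef
  set Y := ∫⁻ x, (‖fderiv ℝ u x‖₊ : ℝ≥0∞) ^ (2:ℝ) with hYdef
  -- finiteness
  have hXfin : X ≠ ∞ := by
    have hint : Integrable (fun x => ‖u x‖^6) := by
      apply Continuous.integrable_of_hasCompactSupport
      · exact (hu.continuous.norm).pow 6
      · exact h2u.comp_left (g := fun q : Quaternion ℝ => ‖q‖^6) (by simp)
    have := hint.lintegral_lt_top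
    have heq : ∀ x : R3, (‖u x‖₊ : ℝ≥0∞) ^ (6:ℝ) = ENNReal.ofReal (‖u x‖^6) := by
      intro x
      rw [ENNReal.ofReal_pow (norm_nonneg _), ofReal_norm_eq_coe_nnnorm,
        ← ENNReal.rpow_natCast]
      norm_num
    have hXr : X = ∫⁻ x, ENNReal.ofReal (‖u x‖^6) := lintegral_congr heq
    rw [hXr]
    exact this.ne
  have hYfin : Y ≠ ∞ := by
    have hint : Integrable (fun x => ‖fderiv ℝ u x‖^2) := by
      apply Continuous.integrable_of_hasCompactSupport
      · exact (hDu.norm (E := R3 →L[ℝ] Quaternion ℝ)).pow 2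
      · exact (h2u.fderiv ℝ).comp_left (g := fun q : R3 →L[ℝ] Quaternion ℝ => ‖q‖^2) (by simp [norm_zero (E := R3 →L[ℝ] Quaternion ℝ)])
    have := hint.lintegral_lt_top
    have heq : ∀ x : R3, (‖fderiv ℝ u x‖₊ : ℝ≥0∞) ^ (2:ℝ) = ENNReal.ofReal (‖fderiv ℝ u x‖^2) := by
      intro x
      rw [ENNReal.ofReal_pow (norm_nonneg (fderiv ℝ u x)), ofReal_norm_eq_coe_nnnorm,
        ← ENNReal.rpow_natCast]
      norm_num
    have hYr : Y = ∫⁻ x, ENNReal.ofReal (‖fderiv ℝ u x‖^2) := lintegral_congr heq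
    rw [hYr]
    exact this.ne
  -- key inequality X ≤ 8 X^{3/4} Y^{3/4}
  have key : X ≤ 8 * (X ^ (3/4:ℝ) * Y ^ (3/4:ℝ)) := by
    set v := fun y : R3 => ‖u y‖^2 * ‖u y‖^2 with hvdef
    have hv1 : ContDiff ℝ 1 v := (hu.norm_sq ℝ).mul (hu.norm_sq ℝ)
    have hv2 : HasCompactSupport v :=
      h2u.comp_left (g := fun q : Quaternion ℝ => ‖q‖^2 * ‖q‖^2) (by simp)
    have sob := lintegral_pow_le_pow_lintegral_fderiv_aux conj32 hv1 hv2
    have hL : (∫⁻ x, (‖v x‖₊ : ℝ≥0∞) ^ (3/2:ℝ)) = X := by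
      rw [hXdef]
      congr 1
      funext x
      have h1 : v x = ‖u x‖^4 := by rw [hvdef]; ring
      rw [h1]
      have h2 : ((‖(‖u x‖^4)‖₊ : ℝ≥0∞)) = ((‖u x‖₊ : ℝ≥0∞))^(4:ℕ) := by
        rw [nnnorm_pow, nnnorm_norm, ENNReal.coe_pow]
      rw [h2, ← ENNReal.rpow_natCast ((‖u x‖₊ : ℝ≥0∞)) 4, ← ENNReal.rpow_mul]
      norm_num
    simp only [enorm_eq_nnnorm] at sob
    rw [hL] at sob
    -- bound the RHS of sob
    have hptw : ∀ x : R3, (‖fderiv ℝ v x‖₊ : ℝ≥0∞)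
        ≤ 4 * (‖u x‖₊ : ℝ≥0∞) ^ (3:ℝ) * (‖fderiv ℝ u x‖₊ : ℝ≥0∞) := by
      intro x
      have hb := fderiv_pow4_bound u hu x
      calc (‖fderiv ℝ v x‖₊ : ℝ≥0∞) = ENNReal.ofReal ‖fderiv ℝ v x‖ :=
            (ofReal_norm_eq_coe_nnnorm _).symm
        _ ≤ ENNReal.ofReal (4 * ‖u x‖^3 * ‖fderiv ℝ u x‖) := ENNReal.ofReal_le_ofReal hb
        _ = 4 * (‖u x‖₊ : ℝ≥0∞) ^ (3:ℝ) * (‖fderiv ℝ u x‖₊ : ℝ≥0∞) := by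
            rw [ENNReal.ofReal_mul (by positivity), ENNReal.ofReal_mul (by norm_num),
              ENNReal.ofReal_pow (norm_nonneg _), ofReal_norm_eq_coe_nnnorm,
              (by exact ofReal_norm_eq_coe_nnnorm (fderiv ℝ u x) :
                ENNReal.ofReal ‖fderiv ℝ u x‖ = _), ← ENNReal.rpow_natCast (‖u x‖₊ : ℝ≥0∞) 3]
            norm_num
    have hI : (∫⁻ x, (‖fderiv ℝ v x‖₊ : ℝ≥0∞))
        ≤ 4 * ∫⁻ x, (‖u x‖₊ : ℝ≥0∞) ^ (3:ℝ) * (‖fderiv ℝ u x‖₊ : ℝ≥0∞) := by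
      rw [← lintegral_const_mul' _ _ (by norm_num : (4:ℝ≥0∞) ≠ ∞)]
      exact lintegral_mono fun x => by
        calc (‖fderiv ℝ v x‖₊ : ℝ≥0∞) ≤ _ := hptw x
          _ = 4 * ((‖u x‖₊ : ℝ≥0∞) ^ (3:ℝ) * (‖fderiv ℝ u x‖₊ : ℝ≥0∞)) := by ring
    have hH : (∫⁻ x, (‖u x‖₊ : ℝ≥0∞) ^ (3:ℝ) * (‖fderiv ℝ u x‖₊ : ℝ≥0∞))
        ≤ X ^ (1/2:ℝ) * Y ^ (1/2:ℝ) := by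
      have hconj : Real.HolderConjugate 2 2 := by constructor <;> norm_num
      have hf : AEMeasurable (fun x : R3 => (‖u x‖₊ : ℝ≥0∞) ^ (3:ℝ)) volume :=
        ((ENNReal.continuous_coe.comp hu.continuous.nnnorm).aemeasurable).pow_const _
      have hg : AEMeasurable (fun x : R3 => (‖fderiv ℝ u x‖₊ : ℝ≥0∞)) volume :=
        (ENNReal.continuous_coe.comp hDu.nnnorm).aemeasurable
      have := ENNReal.lintegral_mul_le_Lp_mul_Lq volume hconj hf hg
      simp only [Pi.mul_apply] at this
      refine le_trans this ?_
      have h1 : (∫⁻ x, ((‖u x‖₊ : ℝ≥0∞) ^ (3:ℝ)) ^ (2:ℝ)) = X := by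
        rw [hXdef]; congr 1; funext x
        rw [← ENNReal.rpow_mul]; norm_num
      have h2 : (∫⁻ x, ((‖fderiv ℝ u x‖₊ : ℝ≥0∞)) ^ (2:ℝ)) = Y := rfl
      rw [h1, h2]
    have h48 : (4:ℝ≥0∞) ^ (3/2:ℝ) = 8 := by
      rw [show (4:ℝ≥0∞) = (2:ℝ≥0∞)^(2:ℝ) by
        rw [show (2:ℝ) = ((2:ℕ):ℝ) by norm_num, ENNReal.rpow_natCast]; norm_num]
      rw [← ENNReal.rpow_mul]
      rw [show (2:ℝ) * (3/2) = ((3:ℕ):ℝ) by norm_num, ENNReal.rpow_natCast]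
      norm_num
    calc X ≤ (∫⁻ x, (‖fderiv ℝ v x‖₊ : ℝ≥0∞)) ^ (3/2:ℝ) := sob
      _ ≤ (4 * (X ^ (1/2:ℝ) * Y ^ (1/2:ℝ))) ^ (3/2:ℝ) := by
          apply ENNReal.rpow_le_rpow _ (by norm_num)
          exact le_trans hI (by exact mul_le_mul_right hH 4)
      _ = 8 * (X ^ (3/4:ℝ) * Y ^ (3/4:ℝ)) := by
          rw [ENNReal.mul_rpow_of_nonneg _ _ (by norm_num : (0:ℝ) ≤ 3/2),
            ENNReal.mul_rpow_of_nonneg _ _ (by norm_num : (0:ℝ) ≤ 3/2),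
            ← ENNReal.rpow_mul, ← ENNReal.rpow_mul, h48]
          norm_num
  -- conclude X^{1/6} ≤ 4 Y^{1/2}
  have main : X ^ (1/6:ℝ) ≤ 4 * Y ^ (1/2:ℝ) := by
    rcases eq_or_ne X 0 with h0 | h0
    · rw [h0, ENNReal.zero_rpow_of_pos (by norm_num)]
      exact zero_le
    · have hX34 : X ^ (3/4:ℝ) ≠ 0 := by
        simp [ENNReal.rpow_eq_zero_iff, h0, hXfin]
      have hX34' : X ^ (3/4:ℝ) ≠ ∞ := by
        simp [ENNReal.rpow_eq_top_iff, h0, hXfin]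
      have hsplit : X = X ^ (3/4:ℝ) * X ^ (1/4:ℝ) := by
        rw [← ENNReal.rpow_add _ _ h0 hXfin]
        norm_num
      have key2 : X ^ (3/4:ℝ) * X ^ (1/4:ℝ) ≤ X ^ (3/4:ℝ) * (8 * Y ^ (3/4:ℝ)) := by
        rw [← hsplit]
        calc X ≤ 8 * (X ^ (3/4:ℝ) * Y ^ (3/4:ℝ)) := key
          _ = X ^ (3/4:ℝ) * (8 * Y ^ (3/4:ℝ)) := by ring
      have hc : X ^ (1/4:ℝ) ≤ 8 * Y ^ (3/4:ℝ) :=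
        (ENNReal.mul_le_mul_iff_right hX34 hX34').mp key2
      have h84 : (8:ℝ≥0∞) ^ (2/3:ℝ) = 4 := by
        rw [show (8:ℝ≥0∞) = (2:ℝ≥0∞)^(3:ℝ) by
          rw [show (3:ℝ) = ((3:ℕ):ℝ) by norm_num, ENNReal.rpow_natCast]; norm_num]
        rw [← ENNReal.rpow_mul]
        rw [show (3:ℝ) * (2/3) = ((2:ℕ):ℝ) by norm_num, ENNReal.rpow_natCast]
        norm_num
      calc X ^ (1/6:ℝ) = (X ^ (1/4:ℝ)) ^ (2/3:ℝ) := by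
            rw [← ENNReal.rpow_mul]; norm_num
        _ ≤ (8 * Y ^ (3/4:ℝ)) ^ (2/3:ℝ) := ENNReal.rpow_le_rpow hc (by norm_num)
        _ = 4 * Y ^ (1/2:ℝ) := by
            rw [ENNReal.mul_rpow_of_nonneg _ _ (by norm_num : (0:ℝ) ≤ 2/3), h84,
              ← ENNReal.rpow_mul]
            norm_num
  -- Minkowski step: Y^{1/2} ≤ ∑ D_m
  have mink : Y ^ (1/2:ℝ) ≤ ∑ m : Fin 3, (∫⁻ x, (‖pdQ m u x‖₊ : ℝ≥0∞) ^ (2:ℝ)) ^ (1/2:ℝ) := by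
    set f : Fin 3 → R3 → ℝ≥0∞ := fun m x => (‖pdQ m u x‖₊ : ℝ≥0∞) with hfdef
    have hfm : ∀ m, AEMeasurable (f m) volume := fun m =>
      (ENNReal.continuous_coe.comp (ennnorm_pdQ_cont u hu m).nnnorm).aemeasurable
    have hptw : ∀ x : R3, (‖fderiv ℝ u x‖₊ : ℝ≥0∞) ≤ f 0 x + f 1 x + f 2 x := by
      intro x
      have hb := clm_norm_le_sum (fderiv ℝ u x)
      rw [Fin.sum_univ_three] at hb
      calc (‖fderiv ℝ u x‖₊ : ℝ≥0∞) = ENNReal.ofReal ‖fderiv ℝ u x‖ :=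
            (ofReal_norm_eq_coe_nnnorm _).symm
        _ ≤ ENNReal.ofReal (‖pdQ 0 u x‖ + ‖pdQ 1 u x‖ + ‖pdQ 2 u x‖) :=
            ENNReal.ofReal_le_ofReal hb
        _ ≤ f 0 x + f 1 x + f 2 x := by
            rw [ENNReal.ofReal_add (by positivity) (norm_nonneg _),
              ENNReal.ofReal_add (norm_nonneg _) (norm_nonneg _),
              ofReal_norm_eq_coe_nnnorm, ofReal_norm_eq_coe_nnnorm,
              ofReal_norm_eq_coe_nnnorm]
    have hY2 : Y ≤ ∫⁻ x, (f 0 x + f 1 x + f 2 x) ^ (2:ℝ) := by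
      rw [hYdef]
      exact lintegral_mono fun x => ENNReal.rpow_le_rpow (hptw x) (by norm_num)
    have hm1 : (∫⁻ x, ((f 0 + f 1 + f 2) x) ^ (2:ℝ)) ^ (1/2:ℝ)
        ≤ (∫⁻ x, ((f 0 + f 1) x) ^ (2:ℝ)) ^ (1/2:ℝ) + (∫⁻ x, (f 2 x) ^ (2:ℝ)) ^ (1/2:ℝ) :=
      ENNReal.lintegral_Lp_add_le ((hfm 0).add (hfm 1)) (hfm 2) (by norm_num)
    have hm2 : (∫⁻ x, ((f 0 + f 1) x) ^ (2:ℝ)) ^ (1/2:ℝ)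
        ≤ (∫⁻ x, (f 0 x) ^ (2:ℝ)) ^ (1/2:ℝ) + (∫⁻ x, (f 1 x) ^ (2:ℝ)) ^ (1/2:ℝ) :=
      ENNReal.lintegral_Lp_add_le (hfm 0) (hfm 1) (by norm_num)
    calc Y ^ (1/2:ℝ) ≤ (∫⁻ x, ((f 0 + f 1 + f 2) x) ^ (2:ℝ)) ^ (1/2:ℝ) := by
          apply ENNReal.rpow_le_rpow _ (by norm_num)
          simpa using hY2
      _ ≤ (∫⁻ x, (f 0 x) ^ (2:ℝ)) ^ (1/2:ℝ) + (∫⁻ x, (f 1 x) ^ (2:ℝ)) ^ (1/2:ℝ)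
            + (∫⁻ x, (f 2 x) ^ (2:ℝ)) ^ (1/2:ℝ) := by
          refine le_trans hm1 ?_
          exact add_le_add_left hm2 _
      _ = ∑ m : Fin 3, (∫⁻ x, (‖pdQ m u x‖₊ : ℝ≥0∞) ^ (2:ℝ)) ^ (1/2:ℝ) := by
          rw [Fin.sum_univ_three]
  calc X ^ (1/6:ℝ) ≤ 4 * Y ^ (1/2:ℝ) := main
    _ ≤ 4 * ∑ m : Fin 3, (∫⁻ x, (‖pdQ m u x‖₊ : ℝ≥0∞) ^ (2:ℝ)) ^ (1/2:ℝ) :=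
        mul_le_mul_right mink 4

lemma holder3 {α : Type*} [MeasurableSpace α] (μ : Measure α) (f g h : α → ℝ≥0∞)
    (hf : AEMeasurable f μ) (hg : AEMeasurable g μ) (hh : AEMeasurable h μ) :
    ∫⁻ x, f x * g x * h x ∂μ ≤
      (∫⁻ x, f x ^ (3:ℝ) ∂μ) ^ (1/3:ℝ) * (∫⁻ x, g x ^ (2:ℝ) ∂μ) ^ (1/2:ℝ)
        * (∫⁻ x, h x ^ (6:ℝ) ∂μ) ^ (1/6:ℝ) := by
  have hc1 : Real.HolderConjugate 3 (3/2) := ⟨by norm_num, by norm_num, by norm_num⟩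
  have hc2 : Real.HolderConjugate (4/3) 4 := ⟨by norm_num, by norm_num, by norm_num⟩
  have h1 := ENNReal.lintegral_mul_le_Lp_mul_Lq μ hc1 hf (hg.mul hh)
  have h2 := ENNReal.lintegral_mul_le_Lp_mul_Lq μ hc2 (hg.pow_const (3/2:ℝ))
    (hh.pow_const (3/2:ℝ))
  simp only [Pi.mul_apply] at h1 h2
  have e1 : (∫⁻ x, (g x * h x) ^ (3/2:ℝ) ∂μ) = ∫⁻ x, g x ^ (3/2:ℝ) * h x ^ (3/2:ℝ) ∂μ :=
    lintegral_congr fun x => ENNReal.mul_rpow_of_nonneg _ _ (by norm_num)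
  have e2 : (∫⁻ x, (g x ^ (3/2:ℝ)) ^ (4/3:ℝ) ∂μ) = ∫⁻ x, g x ^ (2:ℝ) ∂μ :=
    lintegral_congr fun x => by rw [← ENNReal.rpow_mul]; norm_num
  have e3 : (∫⁻ x, (h x ^ (3/2:ℝ)) ^ (4:ℝ) ∂μ) = ∫⁻ x, h x ^ (6:ℝ) ∂μ :=
    lintegral_congr fun x => by rw [← ENNReal.rpow_mul]; norm_num
  rw [e2, e3] at h2
  have h2' : (∫⁻ x, (g x * h x) ^ (3/2:ℝ) ∂μ) ^ (1/(3/2):ℝ)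
      ≤ (∫⁻ x, g x ^ (2:ℝ) ∂μ) ^ (1/2:ℝ) * (∫⁻ x, h x ^ (6:ℝ) ∂μ) ^ (1/6:ℝ) := by
    rw [e1]
    calc (∫⁻ x, g x ^ (3/2:ℝ) * h x ^ (3/2:ℝ) ∂μ) ^ (1/(3/2):ℝ)
        ≤ ((∫⁻ x, g x ^ (2:ℝ) ∂μ) ^ (1/(4/3):ℝ) * (∫⁻ x, h x ^ (6:ℝ) ∂μ) ^ (1/(4:ℝ))) ^ (1/(3/2):ℝ) :=
          ENNReal.rpow_le_rpow h2 (by norm_num)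
      _ = (∫⁻ x, g x ^ (2:ℝ) ∂μ) ^ (1/2:ℝ) * (∫⁻ x, h x ^ (6:ℝ) ∂μ) ^ (1/6:ℝ) := by
          rw [ENNReal.mul_rpow_of_nonneg _ _ (by norm_num : (0:ℝ) ≤ 1/(3/2)),
            ← ENNReal.rpow_mul, ← ENNReal.rpow_mul]
          norm_num
  calc ∫⁻ x, f x * g x * h x ∂μ = ∫⁻ x, f x * (g x * h x) ∂μ := by
        apply lintegral_congr fun x => by ring
    _ ≤ (∫⁻ x, f x ^ (3:ℝ) ∂μ) ^ (1/3:ℝ) * (∫⁻ x, (g x * h x) ^ (3/2:ℝ) ∂μ) ^ (1/(3/2):ℝ) := h1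
    _ ≤ (∫⁻ x, f x ^ (3:ℝ) ∂μ) ^ (1/3:ℝ)
          * ((∫⁻ x, g x ^ (2:ℝ) ∂μ) ^ (1/2:ℝ) * (∫⁻ x, h x ^ (6:ℝ) ∂μ) ^ (1/6:ℝ)) :=
        mul_le_mul_right h2' _
    _ = _ := by rw [mul_assoc]

lemma norm_eQ (k : Fin 3) : ‖eQ k‖ = 1 := by
  have h : Quaternion.normSq (eQ k) = 1 := by
    fin_cases k <;> rw [Quaternion.normSq_def'] <;> simp [eQ]
  have h2 : ‖eQ k‖ * ‖eQ k‖ = 1 := by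
    rw [← Quaternion.normSq_eq_norm_mul_self, h]
  rcases mul_self_eq_one_iff.mp h2 with h3 | h3
  · exact h3
  · nlinarith [norm_nonneg (eQ k)]

lemma setLIntegral_eq_global {Ω : Set R3} (hΩ : MeasurableSet Ω) {f : R3 → ℝ≥0∞}
    (h0 : ∀ x ∉ Ω, f x = 0) : ∫⁻ x in Ω, f x = ∫⁻ x, f x := by
  rw [← lintegral_indicator hΩ]
  congr 1
  funext x
  by_cases hx : x ∈ Ω
  · simp [Set.indicator_of_mem hx]
  · simp [Set.indicator_of_notMem hx, h0 x hx]

lemma lint_pow_ne_top {E : Type*} [NormedAddCommGroup E] {f : R3 → E} (hf : Continuous f)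
    (h2 : HasCompactSupport f) (n : ℕ) (hn : 0 < n) :
    (∫⁻ x, (‖f x‖₊ : ℝ≥0∞) ^ (n:ℝ)) ≠ ∞ := by
  have hint : Integrable (fun x => ‖f x‖^n) := by
    apply Continuous.integrable_of_hasCompactSupport
    · exact hf.norm.pow n
    · exact h2.comp_left (g := fun e : E => ‖e‖^n) (by simp [hn.ne'])
  have heq : ∀ x : R3, (‖f x‖₊ : ℝ≥0∞) ^ (n:ℝ) = ENNReal.ofReal (‖f x‖^n) := by
    intro x
    rw [ENNReal.ofReal_pow (norm_nonneg _), ofReal_norm_eq_coe_nnnorm,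
      ← ENNReal.rpow_natCast]
  rw [lintegral_congr heq]
  exact hint.lintegral_lt_top.ne

lemma pdQ_compact_support {u : R3 → Quaternion ℝ} (h2u : HasCompactSupport u) (m : Fin 3) :
    HasCompactSupport (pdQ m u) :=
  (h2u.fderiv ℝ).comp_left (g := fun L : R3 →L[ℝ] Quaternion ℝ => L (Pi.single m 1)) (by simp)

lemma pdR_sq {Ω : Set R3} (hΩo : IsOpen Ω) {f : R3 → ℝ} (hf : ContDiffOn ℝ 1 f Ω)
    {x : R3} (hx : x ∈ Ω) (ℓ : Fin 3) :
    pdR ℓ (fun y => f y ^ 2) x = 2 * f x * pdR ℓ f x := by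
  have hd : DifferentiableAt ℝ f x :=
    (hf.contDiffAt (hΩo.mem_nhds hx)).differentiableAt one_ne_zero
  have hfd := hd.hasFDerivAt
  have hsq : HasFDerivAt (fun y => f y ^ 2) (f x • fderiv ℝ f x + f x • fderiv ℝ f x) x := by
    have heq : (fun y => f y ^ 2) = fun y => f y * f y := funext fun y => pow_two (f y)
    rw [heq]
    exact hfd.mul hfd
  rw [pdR, hsq.fderiv]
  simp only [ContinuousLinearMap.add_apply, ContinuousLinearMap.coe_smul', Pi.smul_apply,
    smul_eq_mul]
  rw [pdR]
  ring

/-- the key estimate (e2) in the proof of Theorem 4.6 of the paper.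
For `u` continuously differentiable with compact support contained in `Ω`,
`|(1/2) Σₗ ∫_Ω star(∂ₗu) ∂ₗ(aₗ²) u + ∫_Ω star(Vu) u| ≤ 4 M D₁(u)²` where
`M = Σ_{i,ℓ} ‖aᵢ∂ᵢaₗ‖_{L³(Ω)} < ∞`. -/
theorem stmt8 (Ω : Set R3) (hΩo : IsOpen Ω)
    (a : Fin 3 → R3 → ℝ) (ha : ∀ ℓ, ContDiffOn ℝ 1 (a ℓ) Ω)
    (hM : ∀ i ℓ : Fin 3,
      MemLp (fun x => a i x * pdR i (a ℓ) x) 3 (volume.restrict Ω))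
    (u : R3 → Quaternion ℝ) (hu : ContDiff ℝ 1 u)
    (husupp : HasCompactSupport u) (husub : tsupport u ⊆ Ω) :
    ‖((1 / 2 : ℝ) • ∑ ℓ : Fin 3,
          ∫ x in Ω, star (pdQ ℓ u x) * (pdR ℓ (fun y => a ℓ y ^ 2) x • u x))
        + ∫ x in Ω, star (Vop a u x) * u x‖ ≤
      4 * Msum Ω a * (D1 Ω u) ^ 2 := by
  have hΩm : MeasurableSet Ω := hΩo.measurableSet
  set μΩ := volume.restrict Ω with hμΩ
  set c : Fin 3 → Fin 3 → R3 → ℝ := fun i ℓ x => a i x * pdR i (a ℓ) x with hc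
  set CC : Fin 3 → Fin 3 → ℝ≥0∞ :=
    fun i ℓ => (∫⁻ x, (‖c i ℓ x‖₊ : ℝ≥0∞) ^ (3:ℝ) ∂μΩ) ^ (1/3:ℝ) with hCC
  set DD : Fin 3 → ℝ≥0∞ :=
    fun m => (∫⁻ x, (‖pdQ m u x‖₊ : ℝ≥0∞) ^ (2:ℝ) ∂μΩ) ^ (1/2:ℝ) with hDD
  set UU : ℝ≥0∞ := (∫⁻ x, (‖u x‖₊ : ℝ≥0∞) ^ (6:ℝ) ∂μΩ) ^ (1/6:ℝ) with hUU
  set JJ : Fin 3 → Fin 3 → ℝ≥0∞ := fun i ℓ =>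
    ∫⁻ x, (‖c i ℓ x‖₊ : ℝ≥0∞) * (‖pdQ ℓ u x‖₊ : ℝ≥0∞) * (‖u x‖₊ : ℝ≥0∞) ∂μΩ with hJJ
  -- measurability
  have hcm : ∀ i ℓ, AEMeasurable (fun x => ((‖c i ℓ x‖₊ : ℝ≥0∞))) μΩ := fun i ℓ =>
    (hM i ℓ).aestronglyMeasurable.enorm
  have hdm : ∀ m, AEMeasurable (fun x => ((‖pdQ m u x‖₊ : ℝ≥0∞))) μΩ := fun m =>
    (ENNReal.continuous_coe.comp (ennnorm_pdQ_cont u hu m).nnnorm).aemeasurable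
  have hum : AEMeasurable (fun x => ((‖u x‖₊ : ℝ≥0∞))) μΩ :=
    (ENNReal.continuous_coe.comp hu.continuous.nnnorm).aemeasurable
  -- Hölder
  have hJCD : ∀ i ℓ, JJ i ℓ ≤ CC i ℓ * DD ℓ * UU := fun i ℓ =>
    holder3 μΩ _ _ _ (hcm i ℓ) (hdm ℓ) hum
  -- finiteness
  have hCfin : ∀ i ℓ, CC i ℓ ≠ ∞ := by
    intro i ℓ
    have h3 := (hM i ℓ).2
    rw [eLpNorm_eq_lintegral_rpow_enorm_toReal (by norm_num) (by norm_num)] at h3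
    have : CC i ℓ = eLpNorm (c i ℓ) 3 μΩ := by
      rw [hCC, eLpNorm_eq_lintegral_rpow_enorm_toReal (by norm_num) (by norm_num)]
      norm_num
      rfl
    rw [this]
    exact ((hM i ℓ).2).ne
  have hDfin : ∀ m, DD m ≠ ∞ := by
    intro m
    apply ENNReal.rpow_ne_top_of_nonneg (by norm_num)
    refine (lt_of_le_of_lt (setLIntegral_le_lintegral Ω _) ?_).ne
    exact (lint_pow_ne_top (ennnorm_pdQ_cont u hu m) (pdQ_compact_support husupp m) 2
      (by norm_num)).lt_top
  have hUfin : UU ≠ ∞ := by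
    apply ENNReal.rpow_ne_top_of_nonneg (by norm_num)
    refine (lt_of_le_of_lt (setLIntegral_le_lintegral Ω _) ?_).ne
    exact (lint_pow_ne_top hu.continuous husupp 6 (by norm_num)).lt_top
  have hJfin : ∀ i ℓ, JJ i ℓ ≠ ∞ := fun i ℓ =>
    (lt_of_le_of_lt (hJCD i ℓ) (ENNReal.mul_lt_top
      (ENNReal.mul_lt_top (hCfin i ℓ).lt_top (hDfin ℓ).lt_top) hUfin.lt_top)).ne
  -- support vanishing
  have hu0 : ∀ x ∉ Ω, u x = 0 := fun x hx =>
    image_eq_zero_of_notMem_tsupport (fun h => hx (husub h))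
  have hd0 : ∀ m, ∀ x ∉ Ω, pdQ m u x = 0 := by
    intro m x hx
    have hxf : x ∉ tsupport u := fun h => hx (husub h)
    have : fderiv ℝ u x = 0 := by
      by_contra h
      exact hxf (support_fderiv_subset ℝ (Function.mem_support.mpr h))
    rw [pdQ, this]
    rfl
  -- restricted = global lintegrals
  have hUglob : (∫⁻ x, (‖u x‖₊ : ℝ≥0∞) ^ (6:ℝ) ∂μΩ) = ∫⁻ x, (‖u x‖₊ : ℝ≥0∞) ^ (6:ℝ) := by
    apply setLIntegral_eq_global hΩm
    intro x hx
    rw [hu0 x hx]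
    simp [ENNReal.zero_rpow_of_pos]
  have hDglob : ∀ m, (∫⁻ x, (‖pdQ m u x‖₊ : ℝ≥0∞) ^ (2:ℝ) ∂μΩ)
      = ∫⁻ x, (‖pdQ m u x‖₊ : ℝ≥0∞) ^ (2:ℝ) := by
    intro m
    apply setLIntegral_eq_global hΩm
    intro x hx
    rw [hd0 m x hx]
    simp [ENNReal.zero_rpow_of_pos]
  -- identification of D1 with toReal of DD
  have hL2 : ∀ m, nL2 Ω (pdQ m u) = (DD m).toReal := by
    intro m
    have h1 : ∫ x in Ω, ‖pdQ m u x‖^2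
        = (∫⁻ x, (‖pdQ m u x‖₊ : ℝ≥0∞) ^ (2:ℝ) ∂μΩ).toReal := by
      rw [integral_eq_lintegral_of_nonneg_ae (f := fun x => ‖pdQ m u x‖^2) (Filter.Eventually.of_forall fun x => by positivity)
        (((ennnorm_pdQ_cont u hu m).norm.pow 2).aestronglyMeasurable)]
      congr 1
      apply lintegral_congr
      intro x
      rw [ENNReal.ofReal_pow (norm_nonneg _), ofReal_norm_eq_coe_nnnorm,
        ← ENNReal.rpow_natCast]
      norm_num
    rw [nL2, h1, hDD, ENNReal.toReal_rpow]
  have hD1 : D1 Ω u = ∑ m : Fin 3, (DD m).toReal := by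
    rw [D1]
    exact Finset.sum_congr rfl fun m _ => hL2 m
  have hD1nonneg : ∀ m, 0 ≤ (DD m).toReal := fun m => ENNReal.toReal_nonneg
  have hDle : ∀ m, (DD m).toReal ≤ D1 Ω u := by
    intro m
    rw [hD1]
    exact Finset.single_le_sum (f := fun m => (DD m).toReal)
      (fun i _ => hD1nonneg i) (Finset.mem_univ m)
  have hD1nn : 0 ≤ D1 Ω u := by
    rw [hD1]
    exact Finset.sum_nonneg fun m _ => hD1nonneg m
  -- Sobolev: UU.toReal ≤ 4 * D1
  have hUD : UU.toReal ≤ 4 * D1 Ω u := by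
    have hS := sobolev4 u hu husupp
    have hle : UU ≤ 4 * ∑ m : Fin 3, DD m := by
      rw [hUU, hUglob]
      refine le_trans hS ?_
      gcongr with m hm
      simp only [hDD]
      rw [← hDglob m]
    have hfin : (4 * ∑ m : Fin 3, DD m) ≠ ∞ := by
      rw [Fin.sum_univ_three]
      exact ENNReal.mul_ne_top (by norm_num)
        (ENNReal.add_ne_top.mpr ⟨ENNReal.add_ne_top.mpr ⟨hDfin 0, hDfin 1⟩, hDfin 2⟩)
    refine le_trans (ENNReal.toReal_mono hfin hle) ?_
    rw [ENNReal.toReal_mul, hD1, Fin.sum_univ_three, Fin.sum_univ_three,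
      ENNReal.toReal_add (ENNReal.add_ne_top.mpr ⟨hDfin 0, hDfin 1⟩) (hDfin 2),
      ENNReal.toReal_add (hDfin 0) (hDfin 1)]
    norm_num
  -- identification of Msum
  have hMC : Msum Ω a = ∑ i : Fin 3, ∑ ℓ : Fin 3, (CC i ℓ).toReal := by
    rw [Msum]
    refine Finset.sum_congr rfl fun i _ => Finset.sum_congr rfl fun ℓ _ => ?_
    have h1 : ∫ x in Ω, |a i x * pdR i (a ℓ) x|^3
        = (∫⁻ x, (‖c i ℓ x‖₊ : ℝ≥0∞) ^ (3:ℝ) ∂μΩ).toReal := by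
      simp_rw [← Real.norm_eq_abs]
      rw [integral_eq_lintegral_of_nonneg_ae (Filter.Eventually.of_forall fun x => by positivity)
        ((((hM i ℓ).aestronglyMeasurable.norm.aemeasurable).pow_const 3).aestronglyMeasurable)]
      congr 1
      apply lintegral_congr
      intro x
      rw [ENNReal.ofReal_pow (norm_nonneg _), ofReal_norm_eq_coe_nnnorm,
        ← ENNReal.rpow_natCast]
      norm_num
      simp only [hc, nnnorm_mul, ENNReal.coe_mul]
    rw [h1, hCC, ENNReal.toReal_rpow]
  -- Term A bound
  have hA : ∀ ℓ : Fin 3,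
      ‖(1/2:ℝ) • ∫ x in Ω, star (pdQ ℓ u x) * (pdR ℓ (fun y => a ℓ y ^ 2) x • u x)‖
        ≤ (JJ ℓ ℓ).toReal := by
    intro ℓ
    have hcong : (1/2:ℝ) • (∫ x in Ω, star (pdQ ℓ u x) * (pdR ℓ (fun y => a ℓ y ^ 2) x • u x))
        = ∫ x in Ω, c ℓ ℓ x • (star (pdQ ℓ u x) * u x) := by
      rw [← integral_smul]
      refine setIntegral_congr_fun hΩm (fun x hx => ?_)
      have hpd : pdR ℓ (fun y => a ℓ y ^ 2) x = 2 * a ℓ x * pdR ℓ (a ℓ) x :=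
        pdR_sq hΩo (ha ℓ) hx ℓ
      simp only [hpd, mul_smul_comm, smul_smul]
      congr 1
      simp only [hc]
      ring
    rw [hcong]
    refine le_trans (norm_integral_le_lintegral_norm _) ?_
    have heq : ∀ x : R3, ENNReal.ofReal ‖c ℓ ℓ x • (star (pdQ ℓ u x) * u x)‖
        = (‖c ℓ ℓ x‖₊ : ℝ≥0∞) * (‖pdQ ℓ u x‖₊ : ℝ≥0∞) * (‖u x‖₊ : ℝ≥0∞) := by
      intro x
      have h1 : ‖c ℓ ℓ x • (star (pdQ ℓ u x) * u x)‖
          = ‖c ℓ ℓ x‖ * (‖pdQ ℓ u x‖ * ‖u x‖) := by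
        simp [norm_smul, norm_mul, norm_star]
      rw [h1, ENNReal.ofReal_mul (norm_nonneg _), ENNReal.ofReal_mul (norm_nonneg _),
        ofReal_norm_eq_coe_nnnorm, ofReal_norm_eq_coe_nnnorm, ofReal_norm_eq_coe_nnnorm,
        mul_assoc]
    have : (∫⁻ x, ENNReal.ofReal ‖c ℓ ℓ x • (star (pdQ ℓ u x) * u x)‖ ∂μΩ) = JJ ℓ ℓ :=
      lintegral_congr heq
    rw [this]
  -- pointwise bound for the V-term
  have hVptw : ∀ x : R3, ‖star (Vop a u x) * u x‖ ≤
      |c 2 1 x| * ‖pdQ 1 u x‖ * ‖u x‖ + |c 1 2 x| * ‖pdQ 2 u x‖ * ‖u x‖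
      + |c 2 0 x| * ‖pdQ 0 u x‖ * ‖u x‖ + |c 0 2 x| * ‖pdQ 2 u x‖ * ‖u x‖
      + |c 0 1 x| * ‖pdQ 1 u x‖ * ‖u x‖ + |c 1 0 x| * ‖pdQ 0 u x‖ * ‖u x‖ := by
    intro x
    rw [norm_mul, norm_star]
    have hV : ‖Vop a u x‖ ≤ (|c 2 1 x| * ‖pdQ 1 u x‖ + |c 1 2 x| * ‖pdQ 2 u x‖)
        + (|c 2 0 x| * ‖pdQ 0 u x‖ + |c 0 2 x| * ‖pdQ 2 u x‖)
        + (|c 0 1 x| * ‖pdQ 1 u x‖ + |c 1 0 x| * ‖pdQ 0 u x‖) := by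
      rw [Vop]
      refine le_trans (norm_add_le _ _) (add_le_add (le_trans (norm_add_le _ _)
        (add_le_add ?_ ?_)) ?_) <;>
      · rw [norm_mul, norm_eQ, one_mul]
        refine le_trans (norm_sub_le _ _) ?_
        rw [norm_smul, norm_smul, Real.norm_eq_abs, Real.norm_eq_abs]
    calc ‖Vop a u x‖ * ‖u x‖
        ≤ ((|c 2 1 x| * ‖pdQ 1 u x‖ + |c 1 2 x| * ‖pdQ 2 u x‖)
          + (|c 2 0 x| * ‖pdQ 0 u x‖ + |c 0 2 x| * ‖pdQ 2 u x‖)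
          + (|c 0 1 x| * ‖pdQ 1 u x‖ + |c 1 0 x| * ‖pdQ 0 u x‖)) * ‖u x‖ :=
          mul_le_mul_of_nonneg_right hV (norm_nonneg _)
      _ = _ := by ring
  -- Term B bound
  have hgm : ∀ i ℓ : Fin 3, AEMeasurable
      (fun x => (‖c i ℓ x‖₊ : ℝ≥0∞) * (‖pdQ ℓ u x‖₊ : ℝ≥0∞) * (‖u x‖₊ : ℝ≥0∞)) μΩ :=
    fun i ℓ => ((hcm i ℓ).mul (hdm ℓ)).mul hum
  have hofr : ∀ (i ℓ : Fin 3) (x : R3),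
      ENNReal.ofReal (|c i ℓ x| * ‖pdQ ℓ u x‖ * ‖u x‖)
        = (‖c i ℓ x‖₊ : ℝ≥0∞) * (‖pdQ ℓ u x‖₊ : ℝ≥0∞) * (‖u x‖₊ : ℝ≥0∞) := by
    intro i ℓ x
    rw [ENNReal.ofReal_mul (by positivity), ENNReal.ofReal_mul (by positivity),
      ← Real.norm_eq_abs, ofReal_norm_eq_coe_nnnorm, ofReal_norm_eq_coe_nnnorm,
      ofReal_norm_eq_coe_nnnorm]
  have hB : ‖∫ x in Ω, star (Vop a u x) * u x‖ ≤
      ((JJ 2 1).toReal + (JJ 1 2).toReal + (JJ 2 0).toReal + (JJ 0 2).toReal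
        + (JJ 0 1).toReal + (JJ 1 0).toReal) := by
    refine le_trans (norm_integral_le_lintegral_norm _) ?_
    have hptw : ∀ x : R3, ENNReal.ofReal ‖star (Vop a u x) * u x‖ ≤
        (fun y => (‖c 2 1 y‖₊ : ℝ≥0∞) * ‖pdQ 1 u y‖₊ * ‖u y‖₊) x
        + (fun y => (‖c 1 2 y‖₊ : ℝ≥0∞) * ‖pdQ 2 u y‖₊ * ‖u y‖₊) x
        + (fun y => (‖c 2 0 y‖₊ : ℝ≥0∞) * ‖pdQ 0 u y‖₊ * ‖u y‖₊) x
        + (fun y => (‖c 0 2 y‖₊ : ℝ≥0∞) * ‖pdQ 2 u y‖₊ * ‖u y‖₊) x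
        + (fun y => (‖c 0 1 y‖₊ : ℝ≥0∞) * ‖pdQ 1 u y‖₊ * ‖u y‖₊) x
        + (fun y => (‖c 1 0 y‖₊ : ℝ≥0∞) * ‖pdQ 0 u y‖₊ * ‖u y‖₊) x := by
      intro x
      refine le_trans (ENNReal.ofReal_le_ofReal (hVptw x)) ?_
      simp only
      rw [ENNReal.ofReal_add (by positivity) (by positivity),
        ENNReal.ofReal_add (by positivity) (by positivity),
        ENNReal.ofReal_add (by positivity) (by positivity),
        ENNReal.ofReal_add (by positivity) (by positivity),
        ENNReal.ofReal_add (by positivity) (by positivity),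
        hofr, hofr, hofr, hofr, hofr, hofr]
    have hle1 : (∫⁻ x, ENNReal.ofReal ‖star (Vop a u x) * u x‖ ∂μΩ)
        ≤ JJ 2 1 + JJ 1 2 + JJ 2 0 + JJ 0 2 + JJ 0 1 + JJ 1 0 := by
      refine le_trans (lintegral_mono hptw) ?_
      erw [lintegral_add_left' ((((((hgm 2 1).add (hgm 1 2)).add (hgm 2 0)).add
          (hgm 0 2)).add (hgm 0 1))) _,
        lintegral_add_left' (((((hgm 2 1).add (hgm 1 2)).add (hgm 2 0)).add (hgm 0 2))) _,
        lintegral_add_left' ((((hgm 2 1).add (hgm 1 2)).add (hgm 2 0))) _,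
        lintegral_add_left' (((hgm 2 1).add (hgm 1 2))) _,
        lintegral_add_left' ((hgm 2 1)) _]
    have hSJfin : (JJ 2 1 + JJ 1 2 + JJ 2 0 + JJ 0 2 + JJ 0 1 + JJ 1 0) ≠ ∞ := by
      simp [ENNReal.add_eq_top, hJfin 2 1, hJfin 1 2, hJfin 2 0, hJfin 0 2,
        hJfin 0 1, hJfin 1 0]
    refine le_trans (ENNReal.toReal_mono hSJfin hle1) ?_
    rw [ENNReal.toReal_add (by simp [ENNReal.add_eq_top, hJfin 2 1, hJfin 1 2, hJfin 2 0,
          hJfin 0 2, hJfin 0 1]) (hJfin 1 0),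
      ENNReal.toReal_add (by simp [ENNReal.add_eq_top, hJfin 2 1, hJfin 1 2, hJfin 2 0,
          hJfin 0 2]) (hJfin 0 1),
      ENNReal.toReal_add (by simp [ENNReal.add_eq_top, hJfin 2 1, hJfin 1 2, hJfin 2 0])
        (hJfin 0 2),
      ENNReal.toReal_add (by simp [ENNReal.add_eq_top, hJfin 2 1, hJfin 1 2]) (hJfin 2 0),
      ENNReal.toReal_add (hJfin 2 1) (hJfin 1 2)]
  -- per-term bound by CC, D1
  have hJt : ∀ i ℓ : Fin 3, (JJ i ℓ).toReal
      ≤ (CC i ℓ).toReal * (D1 Ω u * (4 * D1 Ω u)) := by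
    intro i ℓ
    have h1 : (JJ i ℓ).toReal ≤ ((CC i ℓ) * DD ℓ * UU).toReal :=
      ENNReal.toReal_mono (ENNReal.mul_ne_top (ENNReal.mul_ne_top (hCfin i ℓ) (hDfin ℓ))
        hUfin) (hJCD i ℓ)
    rw [ENNReal.toReal_mul, ENNReal.toReal_mul] at h1
    refine le_trans h1 ?_
    rw [mul_assoc]
    refine mul_le_mul_of_nonneg_left ?_ ENNReal.toReal_nonneg
    exact mul_le_mul (hDle ℓ) hUD ENNReal.toReal_nonneg hD1nn
  -- final assembly
  have hsum_eq : ((1/2:ℝ) • ∑ ℓ : Fin 3,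
        ∫ x in Ω, star (pdQ ℓ u x) * (pdR ℓ (fun y => a ℓ y ^ 2) x • u x))
      = ∑ ℓ : Fin 3, (1/2:ℝ) •
        ∫ x in Ω, star (pdQ ℓ u x) * (pdR ℓ (fun y => a ℓ y ^ 2) x • u x) :=
    Finset.smul_sum
  rw [hsum_eq, Fin.sum_univ_three]
  have hMC' : Msum Ω a = (CC 0 0).toReal + (CC 0 1).toReal + (CC 0 2).toReal
      + ((CC 1 0).toReal + (CC 1 1).toReal + (CC 1 2).toReal)
      + ((CC 2 0).toReal + (CC 2 1).toReal + (CC 2 2).toReal) := by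
    rw [hMC]
    simp [Fin.sum_univ_three]
  refine le_trans (norm_add_le _ _) ?_
  have hT : ‖((1/2:ℝ) • ∫ x in Ω, star (pdQ 0 u x) * (pdR 0 (fun y => a 0 y ^ 2) x • u x))
      + ((1/2:ℝ) • ∫ x in Ω, star (pdQ 1 u x) * (pdR 1 (fun y => a 1 y ^ 2) x • u x))
      + ((1/2:ℝ) • ∫ x in Ω, star (pdQ 2 u x) * (pdR 2 (fun y => a 2 y ^ 2) x • u x))‖
      ≤ (JJ 0 0).toReal + (JJ 1 1).toReal + (JJ 2 2).toReal := by
    refine le_trans (norm_add₃_le) ?_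
    exact add_le_add (add_le_add (hA 0) (hA 1)) (hA 2)
  have hgoal : (JJ 0 0).toReal + (JJ 1 1).toReal + (JJ 2 2).toReal
      + ((JJ 2 1).toReal + (JJ 1 2).toReal + (JJ 2 0).toReal + (JJ 0 2).toReal
        + (JJ 0 1).toReal + (JJ 1 0).toReal)
      ≤ 4 * Msum Ω a * (D1 Ω u)^2 := by
    have h9 := fun i ℓ => hJt i ℓ
    have e : 4 * Msum Ω a * (D1 Ω u)^2
        = ((CC 0 0).toReal + (CC 0 1).toReal + (CC 0 2).toReal
          + ((CC 1 0).toReal + (CC 1 1).toReal + (CC 1 2).toReal)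
          + ((CC 2 0).toReal + (CC 2 1).toReal + (CC 2 2).toReal))
            * (D1 Ω u * (4 * D1 Ω u)) := by
      rw [hMC']
      ring
    rw [e, add_mul, add_mul, add_mul, add_mul, add_mul, add_mul, add_mul, add_mul]
    linarith [h9 0 0, h9 0 1, h9 0 2, h9 1 0, h9 1 1, h9 1 2, h9 2 0, h9 2 1, h9 2 2]
  linarith [hT, hB, hgoal]
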